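/- (Sorting property of the Toda diagonal entries.) For 1 ≤ j ≤ N define b_j(x) = τ_j'(x)/τ_j(x) − τ_{j−1}'(x)/τ_{j−1}(x) (the logarithmic derivative of τ_j/τ_{j−1}; all τ_j are strictly positive). Then for every 1 ≤ j ≤ N: b_j(x) → −k_j as x → +∞, and b_j(x) → −k_{N−j+1} as x → −∞. -/

import Mathlib

open Filter

open Finset

-- normalized sum tends to the dominant coefficient
lemma aux_sum_tendsto {ι : Type*} [DecidableEq ι] (T : Finset ι) (c a : ι → ℝ) (i0 : ι) (hi0 : i0 ∈ T)
    (l : Filter ℝ) (h : ∀ i ∈ T, i ≠ i0 → Tendsto (fun x => (a i - a i0) * x) l atBot) :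
    Tendsto (fun x => ∑ i ∈ T, c i * Real.exp ((a i - a i0) * x)) l (nhds (c i0)) := by
  have hc : c i0 = ∑ i ∈ T, if i = i0 then c i0 else 0 := by
    rw [Finset.sum_ite_eq' T i0 (fun _ => c i0)]; simp [hi0]
  rw [hc]
  apply tendsto_finset_sum
  intro i hi
  by_cases h' : i = i0
  · subst h'; simpa using tendsto_const_nhds
  · simp only [h', if_false]
    have := Real.tendsto_exp_atBot.comp (h i hi h')
    simpa using (this.const_mul (c i))

lemma aux_logderiv_tendsto {ι : Type*} [DecidableEq ι] (T : Finset ι) (c a : ι → ℝ)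
    (hc : ∀ i ∈ T, 0 < c i) (i0 : ι) (hi0 : i0 ∈ T) (l : Filter ℝ)
    (h : ∀ i ∈ T, i ≠ i0 → Tendsto (fun x => (a i - a i0) * x) l atBot) :
    Tendsto (fun x => deriv (fun y => ∑ i ∈ T, c i * Real.exp (a i * y)) x /
      (∑ i ∈ T, c i * Real.exp (a i * x))) l (nhds (a i0)) := by
  have hderiv : ∀ x : ℝ, deriv (fun y => ∑ i ∈ T, c i * Real.exp (a i * y)) x
      = ∑ i ∈ T, (c i * a i) * Real.exp (a i * x) := by
    intro x
    have : HasDerivAt (fun y => ∑ i ∈ T, c i * Real.exp (a i * y))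
        (∑ i ∈ T, (c i * a i) * Real.exp (a i * x)) x := by
      apply HasDerivAt.fun_sum
      intro i hi
      have h1 : HasDerivAt (fun y : ℝ => a i * y) (a i) x := by
        simpa using (hasDerivAt_id x).const_mul (a i)
      have h2 := (h1.exp).const_mul (c i)
      exact h2.congr_deriv (by ring)
    exact this.deriv
  have key : ∀ x : ℝ, deriv (fun y => ∑ i ∈ T, c i * Real.exp (a i * y)) x /
      (∑ i ∈ T, c i * Real.exp (a i * x))
      = (∑ i ∈ T, (c i * a i) * Real.exp ((a i - a i0) * x)) /
        (∑ i ∈ T, c i * Real.exp ((a i - a i0) * x)) := by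
    intro x
    rw [hderiv]
    have he : ∀ (d : ι → ℝ), ∑ i ∈ T, d i * Real.exp ((a i - a i0) * x)
        = (∑ i ∈ T, d i * Real.exp (a i * x)) * Real.exp (-(a i0 * x)) := by
      intro d
      rw [Finset.sum_mul]
      apply Finset.sum_congr rfl
      intro i _
      rw [mul_assoc, ← Real.exp_add]
      ring_nf
    rw [he, he, mul_div_mul_right _ _ (Real.exp_ne_zero _)]
  have hnum := aux_sum_tendsto T (fun i => c i * a i) a i0 hi0 l h
  have hden := aux_sum_tendsto T c a i0 hi0 l h
  have hne : c i0 ≠ 0 := ne_of_gt (hc i0 hi0)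
  have hlim : c i0 * a i0 / c i0 = a i0 := by field_simp
  have h2 : Tendsto (fun x => (∑ i ∈ T, (c i * a i) * Real.exp ((a i - a i0) * x)) /
      (∑ i ∈ T, c i * Real.exp ((a i - a i0) * x))) l (nhds (a i0)) := by
    have := hnum.div hden hne
    rw [hlim] at this
    exact this
  exact h2.congr fun x => (key x).symm

lemma aux_sum_min_le (N : ℕ) (k : ℕ → ℝ)
    (hk : ∀ a b, 1 ≤ a → a ≤ b → b ≤ N → k a ≤ k b) :
    ∀ j (S : Finset ℕ), S ⊆ Icc 1 N → S.card = j →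
      ∑ l ∈ Icc 1 j, k l ≤ ∑ l ∈ S, k l := by
  intro j
  induction j with
  | zero => intro S _ hcard; simp [Finset.card_eq_zero.mp hcard]
  | succ m ih =>
    intro S hS hcard
    have hne : S.Nonempty := Finset.card_pos.mp (by omega)
    set M := S.max' hne with hM
    have hMS : M ∈ S := S.max'_mem hne
    have hMN : M ≤ N := (Finset.mem_Icc.mp (hS hMS)).2
    have hsub : S ⊆ Icc 1 M := by
      intro x hx
      exact Finset.mem_Icc.mpr ⟨(Finset.mem_Icc.mp (hS hx)).1, S.le_max' x hx⟩
    have hMge : m + 1 ≤ M := by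
      have := Finset.card_le_card hsub
      rwa [hcard, Nat.card_Icc, Nat.add_sub_cancel] at this
    have herase : (S.erase M) ⊆ Icc 1 N := (Finset.erase_subset _ _).trans hS
    have hcarde : (S.erase M).card = m := by
      rw [Finset.card_erase_of_mem hMS, hcard]
      omega
    have h1 := ih (S.erase M) herase hcarde
    have h2 : k (m + 1) ≤ k M := hk (m+1) M (by omega) hMge hMN
    have h3 : ∑ l ∈ S, k l = ∑ l ∈ S.erase M, k l + k M :=
      (Finset.sum_erase_add S k hMS).symm
    have h4 : ∑ l ∈ Icc 1 (m+1), k l = ∑ l ∈ Icc 1 m, k l + k (m+1) :=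
      Finset.sum_Icc_succ_top (by omega) k
    rw [h3, h4]
    exact add_le_add h1 h2

lemma aux_sum_min_lt (N : ℕ) (k : ℕ → ℝ)
    (hk : ∀ a b, 1 ≤ a → a < b → b ≤ N → k a < k b)
    (hk' : ∀ a b, 1 ≤ a → a ≤ b → b ≤ N → k a ≤ k b)
    (j : ℕ) (S : Finset ℕ) (hS : S ⊆ Icc 1 N) (hcard : S.card = j)
    (hne : S ≠ Icc 1 j) : ∑ l ∈ Icc 1 j, k l < ∑ l ∈ S, k l := by
  rcases j with _ | m
  · exfalso; apply hne; rw [Finset.card_eq_zero.mp hcard]; simp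
  · have hnem : S.Nonempty := Finset.card_pos.mp (by omega)
    set M := S.max' hnem with hM
    have hMS : M ∈ S := S.max'_mem hnem
    have hMN : M ≤ N := (Finset.mem_Icc.mp (hS hMS)).2
    have hsub : S ⊆ Icc 1 M := by
      intro x hx
      exact Finset.mem_Icc.mpr ⟨(Finset.mem_Icc.mp (hS hx)).1, S.le_max' x hx⟩
    have hMge : m + 1 ≤ M := by
      have := Finset.card_le_card hsub
      rwa [hcard, Nat.card_Icc, Nat.add_sub_cancel] at this
    have hMgt : m + 1 < M := by
      rcases eq_or_lt_of_le hMge with h | h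
      · exfalso; apply hne
        apply Finset.eq_of_subset_of_card_le (h ▸ hsub)
        rw [hcard, Nat.card_Icc]; omega
      · exact h
    have herase : (S.erase M) ⊆ Icc 1 N := (Finset.erase_subset _ _).trans hS
    have hcarde : (S.erase M).card = m := by
      rw [Finset.card_erase_of_mem hMS, hcard]
      omega
    have h1 := aux_sum_min_le N k hk' m (S.erase M) herase hcarde
    have h2 : k (m + 1) < k M := hk (m+1) M (by omega) hMgt hMN
    have h3 : ∑ l ∈ S, k l = ∑ l ∈ S.erase M, k l + k M :=
      (Finset.sum_erase_add S k hMS).symm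
    have h4 : ∑ l ∈ Icc 1 (m+1), k l = ∑ l ∈ Icc 1 m, k l + k (m+1) :=
      Finset.sum_Icc_succ_top (by omega) k
    rw [h3, h4]
    exact add_lt_add_of_le_of_lt h1 h2

lemma aux_icc_top_insert (N a : ℕ) (ha : 1 ≤ a) (haN : a ≤ N) (k : ℕ → ℝ) :
    ∑ l ∈ Icc a N, k l = k a + ∑ l ∈ Icc (a+1) N, k l := by
  have : Icc a N = insert a (Icc (a+1) N) := by
    ext x; simp only [Finset.mem_Icc, Finset.mem_insert]; omega
  rw [this, Finset.sum_insert (by simp)]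

lemma aux_sum_max_le (N : ℕ) (k : ℕ → ℝ)
    (hk : ∀ a b, 1 ≤ a → a ≤ b → b ≤ N → k a ≤ k b) :
    ∀ j (S : Finset ℕ), S ⊆ Icc 1 N → S.card = j →
      ∑ l ∈ S, k l ≤ ∑ l ∈ Icc (N - j + 1) N, k l := by
  intro j
  induction j with
  | zero => intro S _ hcard; rw [Finset.card_eq_zero.mp hcard]; simp
  | succ m ih =>
    intro S hS hcard
    have hjN : m + 1 ≤ N := by
      have := Finset.card_le_card hS
      rw [hcard, Nat.card_Icc] at this; omega
    have hnem : S.Nonempty := Finset.card_pos.mp (by omega)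
    set M := S.min' hnem with hM
    have hMS : M ∈ S := S.min'_mem hnem
    have hM1 : 1 ≤ M := (Finset.mem_Icc.mp (hS hMS)).1
    have hsub : S ⊆ Icc M N := by
      intro x hx
      exact Finset.mem_Icc.mpr ⟨S.min'_le x hx, (Finset.mem_Icc.mp (hS hx)).2⟩
    have hMle : M ≤ N - m := by
      have := Finset.card_le_card hsub
      rw [hcard, Nat.card_Icc] at this; omega
    have herase : (S.erase M) ⊆ Icc 1 N := (Finset.erase_subset _ _).trans hS
    have hcarde : (S.erase M).card = m := by
      rw [Finset.card_erase_of_mem hMS, hcard]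
      omega
    have h1 := ih (S.erase M) herase hcarde
    have h2 : k M ≤ k (N - m) := hk M (N-m) hM1 hMle (by omega)
    have h3 : ∑ l ∈ S, k l = k M + ∑ l ∈ S.erase M, k l := by
      rw [← Finset.sum_erase_add S k hMS]; ring
    have h4 : ∑ l ∈ Icc (N - (m+1) + 1) N, k l
        = k (N - m) + ∑ l ∈ Icc (N - m + 1) N, k l := by
      have he : N - (m+1) + 1 = N - m := by omega
      rw [he, aux_icc_top_insert N (N-m) (by omega) (by omega) k]
    rw [h3, h4]
    exact add_le_add h2 h1

lemma aux_sum_max_lt (N : ℕ) (k : ℕ → ℝ)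
    (hk : ∀ a b, 1 ≤ a → a < b → b ≤ N → k a < k b)
    (hk' : ∀ a b, 1 ≤ a → a ≤ b → b ≤ N → k a ≤ k b)
    (j : ℕ) (S : Finset ℕ) (hS : S ⊆ Icc 1 N) (hcard : S.card = j)
    (hne : S ≠ Icc (N - j + 1) N) :
    ∑ l ∈ S, k l < ∑ l ∈ Icc (N - j + 1) N, k l := by
  rcases j with _ | m
  · exfalso; apply hne; rw [Finset.card_eq_zero.mp hcard]
    symm; rw [← Finset.card_eq_zero, Nat.card_Icc]; omega
  · have hjN : m + 1 ≤ N := by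
      have := Finset.card_le_card hS
      rw [hcard, Nat.card_Icc] at this; omega
    have hnem : S.Nonempty := Finset.card_pos.mp (by omega)
    set M := S.min' hnem with hM
    have hMS : M ∈ S := S.min'_mem hnem
    have hM1 : 1 ≤ M := (Finset.mem_Icc.mp (hS hMS)).1
    have hsub : S ⊆ Icc M N := by
      intro x hx
      exact Finset.mem_Icc.mpr ⟨S.min'_le x hx, (Finset.mem_Icc.mp (hS hx)).2⟩
    have hMle : M ≤ N - m := by
      have := Finset.card_le_card hsub
      rw [hcard, Nat.card_Icc] at this; omega
    have hMlt : M < N - m := by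
      rcases eq_or_lt_of_le hMle with h | h
      · exfalso; apply hne
        apply Finset.eq_of_subset_of_card_le
        · have he : N - (m+1) + 1 = N - m := by omega
          rw [he, ← h]; exact hsub
        · rw [hcard, Nat.card_Icc]; omega
      · exact h
    have herase : (S.erase M) ⊆ Icc 1 N := (Finset.erase_subset _ _).trans hS
    have hcarde : (S.erase M).card = m := by
      rw [Finset.card_erase_of_mem hMS, hcard]
      omega
    have h1 := aux_sum_max_le N k hk' m (S.erase M) herase hcarde
    have h2 : k M < k (N - m) := hk M (N-m) hM1 hMlt (by omega)
    have h3 : ∑ l ∈ S, k l = k M + ∑ l ∈ S.erase M, k l := by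
      rw [← Finset.sum_erase_add S k hMS]; ring
    have h4 : ∑ l ∈ Icc (N - (m+1) + 1) N, k l
        = k (N - m) + ∑ l ∈ Icc (N - m + 1) N, k l := by
      have he : N - (m+1) + 1 = N - m := by omega
      rw [he, aux_icc_top_insert N (N-m) (by omega) (by omega) k]
    rw [h3, h4]
    exact add_lt_add_of_lt_of_le h2 h1

/-- sorting property of the Toda diagonal entries: with
τ_j(x) = Σ_{|S|=j} Δ(S) exp(Σ_{l∈S}(−k_l x + θ_l⁰)) (so τ_0 = 1) and
b_j = τ_j'/τ_j − τ_{j−1}'/τ_{j−1}, one has b_j(x) → −k_j as x → +∞ and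
b_j(x) → −k_{N−j+1} as x → −∞, for every 1 ≤ j ≤ N. -/
theorem toda_diagonal_sorting
    (N : ℕ) (hN : 1 ≤ N)
    (k θ0 : ℕ → ℝ)
    (hk : ∀ a b, 1 ≤ a → a < b → b ≤ N → k a < k b)
    (Δ : Finset ℕ → ℝ)
    (hΔ : ∀ S, Δ S = ∏ l ∈ S, ∏ m ∈ S.filter (fun m => l < m), (k l - k m) ^ 2)
    (τ : ℕ → ℝ → ℝ)
    (hτ : ∀ j x, τ j x = ∑ S ∈ Finset.powersetCard j (Finset.Icc 1 N),
        Δ S * Real.exp (∑ l ∈ S, (-(k l) * x + θ0 l)))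
    (b : ℕ → ℝ → ℝ)
    (hb : ∀ j x, b j x = deriv (τ j) x / τ j x - deriv (τ (j - 1)) x / τ (j - 1) x) :
    ∀ j, 1 ≤ j → j ≤ N →
      Tendsto (b j) atTop (nhds (-(k j))) ∧
      Tendsto (b j) atBot (nhds (-(k (N - j + 1)))) := by

  have hk' : ∀ a b, 1 ≤ a → a ≤ b → b ≤ N → k a ≤ k b := by
    intro a b ha hab hbN
    rcases eq_or_lt_of_le hab with rfl | h
    · exact le_refl _
    · exact (hk a b ha h hbN).le
  set T : ℕ → Finset (Finset ℕ) := fun i => Finset.powersetCard i (Finset.Icc 1 N) with hT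
  set c : Finset ℕ → ℝ := fun S => Δ S * Real.exp (∑ l ∈ S, θ0 l) with hcdef
  set A : Finset ℕ → ℝ := fun S => -(∑ l ∈ S, k l) with hAdef
  have hτeq : ∀ i, τ i = fun x => ∑ S ∈ T i, c S * Real.exp (A S * x) := by
    intro i; funext x; rw [hτ]
    apply Finset.sum_congr rfl
    intro S _
    have h1 : ∑ l ∈ S, (-(k l) * x + θ0 l) = A S * x + ∑ l ∈ S, θ0 l := by
      rw [Finset.sum_add_distrib, ← Finset.sum_mul, hAdef]
      simp [Finset.sum_neg_distrib]
    rw [h1, Real.exp_add]; ring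
  have hΔpos : ∀ S : Finset ℕ, S ⊆ Finset.Icc 1 N → 0 < Δ S := by
    intro S hS
    rw [hΔ]
    apply Finset.prod_pos
    intro l hl
    apply Finset.prod_pos
    intro m hm
    obtain ⟨hmS, hlm⟩ := Finset.mem_filter.mp hm
    have hkl : k l < k m :=
      hk l m (Finset.mem_Icc.mp (hS hl)).1 hlm (Finset.mem_Icc.mp (hS hmS)).2
    exact pow_two_pos_of_ne_zero (sub_ne_zero.mpr (ne_of_lt hkl))
  have hcpos : ∀ i, ∀ S ∈ T i, 0 < c S := by
    intro i S hSmem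
    obtain ⟨hSsub, _⟩ := Finset.mem_powersetCard.mp hSmem
    exact mul_pos (hΔpos S hSsub) (Real.exp_pos _)
  -- limit at +∞ for each i ≤ N
  have main_top : ∀ i, i ≤ N →
      Tendsto (fun x => deriv (τ i) x / τ i x) atTop (nhds (-(∑ l ∈ Icc 1 i, k l))) := by
    intro i hiN
    have hi0mem : Icc 1 i ∈ T i := by
      rw [hT]; rw [Finset.mem_powersetCard]
      constructor
      · exact Finset.Icc_subset_Icc_right hiN
      · rw [Nat.card_Icc]; omega
    have hcond : ∀ S ∈ T i, S ≠ Icc 1 i →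
        Tendsto (fun x => (A S - A (Icc 1 i)) * x) atTop atBot := by
      intro S hS hne
      obtain ⟨hSsub, hScard⟩ := Finset.mem_powersetCard.mp hS
      have hlt := aux_sum_min_lt N k hk hk' i S hSsub hScard hne
      have hneg : A S - A (Icc 1 i) < 0 := by
        rw [hAdef]; simp only; linarith
      exact Tendsto.const_mul_atTop_of_neg hneg tendsto_id
    have := aux_logderiv_tendsto (T i) c A (hcpos i) (Icc 1 i) hi0mem atTop hcond
    rw [hτeq i]
    have hA : A (Icc 1 i) = -(∑ l ∈ Icc 1 i, k l) := rfl
    rw [← hA]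
    exact this
  -- limit at −∞ for each i ≤ N
  have main_bot : ∀ i, i ≤ N →
      Tendsto (fun x => deriv (τ i) x / τ i x) atBot
        (nhds (-(∑ l ∈ Icc (N - i + 1) N, k l))) := by
    intro i hiN
    have hi0mem : Icc (N - i + 1) N ∈ T i := by
      rw [hT]; rw [Finset.mem_powersetCard]
      constructor
      · exact Finset.Icc_subset_Icc_left (by omega)
      · rw [Nat.card_Icc]; omega
    have hcond : ∀ S ∈ T i, S ≠ Icc (N - i + 1) N →
        Tendsto (fun x => (A S - A (Icc (N - i + 1) N)) * x) atBot atBot := by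
      intro S hS hne
      obtain ⟨hSsub, hScard⟩ := Finset.mem_powersetCard.mp hS
      have hlt := aux_sum_max_lt N k hk hk' i S hSsub hScard hne
      have hpos : 0 < A S - A (Icc (N - i + 1) N) := by
        rw [hAdef]; simp only; linarith
      exact Tendsto.const_mul_atBot hpos tendsto_id
    have := aux_logderiv_tendsto (T i) c A (hcpos i) _ hi0mem atBot hcond
    rw [hτeq i]
    exact this
  intro j hj1 hjN
  have hbeq : b j = fun x => deriv (τ j) x / τ j x - deriv (τ (j-1)) x / τ (j-1) x := by
    funext x; exact hb j x
  constructor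
  · have h1 := main_top j hjN
    have h2 := main_top (j-1) (by omega)
    have h3 := h1.sub h2
    rw [hbeq]
    have hsum : ∑ l ∈ Icc 1 j, k l = ∑ l ∈ Icc 1 (j-1), k l + k j := by
      have : j = (j - 1) + 1 := by omega
      rw [this, Finset.sum_Icc_succ_top (by omega) k]
      congr 1 <;> omega
    have hconst : -(∑ l ∈ Icc 1 j, k l) - -(∑ l ∈ Icc 1 (j-1), k l) = -(k j) := by
      rw [hsum]; ring
    rw [← hconst]
    exact h3
  · have h1 := main_bot j hjN
    have h2 := main_bot (j-1) (by omega)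
    have h3 := h1.sub h2
    rw [hbeq]
    have hsum : ∑ l ∈ Icc (N - j + 1) N, k l
        = k (N - j + 1) + ∑ l ∈ Icc (N - (j-1) + 1) N, k l := by
      have he : N - (j - 1) + 1 = (N - j + 1) + 1 := by omega
      rw [he, aux_icc_top_insert N (N - j + 1) (by omega) (by omega) k]
    have hconst : -(∑ l ∈ Icc (N - j + 1) N, k l)
        - -(∑ l ∈ Icc (N - (j-1) + 1) N, k l) = -(k (N - j + 1)) := by
      rw [hsum]; ring
    rw [← hconst]
    exact h3
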